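/- Under backward sampling, the sequence (Y_i, Z_i)_{i=1,...,n} is a (generally time-inhomogeneous) Markov chain: the conditional distribution of Y_i given (Y_1,Z_1,...,Y_{i-1},Z_{i-1}) and the constraint C depends only on Z_{i-1}, and equals π_i·B_i(Z_{i-1}+1)/B_{i-1}(Z_{i-1}). -/

import Mathlib

open scoped Classical
open Finset

/-- Product Bernoulli weight of a configuration: individual `i+1` (1-based) has
probability `π (i+1)` of being a case (`true`). -/
noncomputable def wgt (n : ℕ) (π : ℕ → ℝ) (y : Fin n → Bool) : ℝ :=
  ∏ i : Fin n, if y i then π (i.1 + 1) else 1 - π (i.1 + 1)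

/-- Probability of an event under the product Bernoulli law. -/
noncomputable def prb (n : ℕ) (π : ℕ → ℝ) (E : (Fin n → Bool) → Prop) : ℝ :=
  ∑ y : Fin n → Bool, if E y then wgt n π y else 0

/-- Partial sum `Z_j = Y_1 + ... + Y_j`. -/
def zsum (n : ℕ) (y : Fin n → Bool) (j : ℕ) : ℤ :=
  ((Finset.univ.filter (fun i : Fin n => i.1 < j ∧ y i)).card : ℤ)

/-- Tail sum `Y_{i+1} + ... + Y_n`. -/
def tcnt (n : ℕ) (y : Fin n → Bool) (i : ℕ) : ℤ :=
  ((Finset.univ.filter (fun k : Fin n => i ≤ k.1 ∧ y k)).card : ℤ)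

/-- Forward quantity `F_i(m) = P(Z_i = m)`. -/
noncomputable def fwd (n : ℕ) (π : ℕ → ℝ) (i : ℕ) (m : ℤ) : ℝ :=
  prb n π (fun y => zsum n y i = m)

/-- Backward quantity `B_i(m) = P(Y_{i+1} + ... + Y_n = n1 - m)`. -/
noncomputable def bwd (n : ℕ) (π : ℕ → ℝ) (n1 : ℤ) (i : ℕ) (m : ℤ) : ℝ :=
  prb n π (fun y => tcnt n y i = n1 - m)


lemma prb_congr (n : ℕ) (π : ℕ → ℝ) (E E' : (Fin n → Bool) → Prop)
    (h : ∀ y, E y ↔ E' y) : prb n π E = prb n π E' := by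
  unfold prb
  apply Finset.sum_congr rfl
  intro y _
  simp [h y]

lemma zsum_split (n t : ℕ) (y : Fin n → Bool) :
    zsum n y n = zsum n y t + tcnt n y t := by
  unfold zsum tcnt
  rw [← Nat.cast_add]
  congr 1
  rw [← Finset.card_union_of_disjoint (by
    rw [Finset.disjoint_filter]
    intro j _ hj hj'
    omega)]
  congr 1
  ext j
  by_cases h : y j = true <;> simp [h, j.isLt] <;> omega

lemma zsum_head_congr (n t : ℕ) (y a : Fin n → Bool)
    (h : ∀ j : Fin n, j.1 < t → y j = a j) : zsum n y t = zsum n a t := by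
  unfold zsum
  congr 2
  apply Finset.filter_congr
  intro j _
  by_cases hj : j.1 < t
  · simp [hj, h j hj]
  · simp [hj]

lemma tcnt_tail_congr (n t : ℕ) (y y' : Fin n → Bool)
    (h : ∀ j : Fin n, t ≤ j.1 → y j = y' j) : tcnt n y t = tcnt n y' t := by
  unfold tcnt
  congr 2
  apply Finset.filter_congr
  intro j _
  by_cases hj : t ≤ j.1
  · simp [hj, h j hj]
  · simp [hj]

/-- Key factorization: the probability of {head = a on [0,t)} ∩ {tail event}
factors as (head weight) × P(tail event). -/
lemma factor (n t : ℕ) (π : ℕ → ℝ) (a : Fin n → Bool) (P : (Fin n → Bool) → Prop)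
    (hP : ∀ y y' : Fin n → Bool, (∀ j : Fin n, t ≤ j.1 → y j = y' j) → P y → P y') :
    prb n π (fun y => (∀ j : Fin n, j.1 < t → y j = a j) ∧ P y)
      = (∏ j ∈ Finset.univ.filter (fun j : Fin n => j.1 < t),
          (if a j then π (j.1 + 1) else 1 - π (j.1 + 1))) * prb n π P := by
  classical
  set w : Fin n → Bool → ℝ := fun j b => if b then π (j.1 + 1) else 1 - π (j.1 + 1) with hw
  set p : Fin n → Prop := fun j => j.1 < t with hp
  set e := Equiv.piEquivPiSubtypeProd p (fun _ => Bool) with he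
  set ar : {x : Fin n // p x} → Bool := fun j => a j.1 with har
  set A : ({x : Fin n // p x} → Bool) → ℝ := fun u => ∏ j : {x // p x}, w j.1 (u j) with hA
  set B : ({x : Fin n // ¬ p x} → Bool) → ℝ := fun v => ∏ j : {x // ¬ p x}, w j.1 (v j) with hB
  have hsum : ∀ f : (Fin n → Bool) → ℝ,
      ∑ y : Fin n → Bool, f y
        = ∑ u : {x : Fin n // p x} → Bool, ∑ v : {x : Fin n // ¬ p x} → Bool,
            f (e.symm (u, v)) := by
    intro f
    rw [← Equiv.sum_comp e.symm f, Fintype.sum_prod_type]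
  have happ : ∀ (u : {x : Fin n // p x} → Bool) (v : {x : Fin n // ¬ p x} → Bool) (j : Fin n),
      e.symm (u, v) j = if h : p j then u ⟨j, h⟩ else v ⟨j, h⟩ := by
    intro u v j
    rw [he, Equiv.piEquivPiSubtypeProd_symm_apply]
  have hwgt : ∀ u v, wgt n π (e.symm (u, v)) = A u * B v := by
    intro u v
    rw [wgt, ← Fintype.prod_subtype_mul_prod_subtype p
      (fun j => if (e.symm (u, v)) j then π (j.1 + 1) else 1 - π (j.1 + 1))]
    congr 1
    · apply Finset.prod_congr rfl
      intro j _
      rw [happ, dif_pos j.2]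
    · apply Finset.prod_congr rfl
      intro j _
      rw [happ, dif_neg j.2]
  have hcond : ∀ u v, ((∀ j : Fin n, j.1 < t → e.symm (u, v) j = a j) ↔ u = ar) := by
    intro u v
    constructor
    · intro h
      funext j
      have := h j.1 j.2
      rwa [happ, dif_pos j.2] at this
    · intro h j hj
      rw [happ, dif_pos hj, h]
  have hPiff : ∀ u u' v, P (e.symm (u, v)) ↔ P (e.symm (u', v)) := by
    have key : ∀ u u' v j, t ≤ (j : Fin n).1 → e.symm (u, v) j = e.symm (u', v) j := by
      intro u u' v j hj
      rw [happ, happ, dif_neg (by rw [hp]; omega), dif_neg (by rw [hp]; omega)]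
    intro u u' v
    exact ⟨hP _ _ (key u u' v), hP _ _ (key u' u v)⟩
  have hAone : ∑ u : {x : Fin n // p x} → Bool, A u = 1 := by
    have h0 := Finset.prod_univ_sum (fun _ : {x : Fin n // p x} => (Finset.univ : Finset Bool))
      (fun j b => w j.1 b)
    rw [Fintype.piFinset_univ] at h0
    rw [show (∑ u : {x : Fin n // p x} → Bool, A u)
        = ∑ u : {x : Fin n // p x} → Bool, ∏ j : {x : Fin n // p x}, w j.1 (u j) from rfl,
      ← h0]
    apply Finset.prod_eq_one
    intro j _
    rw [Fintype.sum_bool]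
    simp only [hw]
    norm_num
  have hhead : (∏ j ∈ Finset.univ.filter (fun j : Fin n => j.1 < t),
      (if a j then π (j.1 + 1) else 1 - π (j.1 + 1))) = A ar := by
    rw [hA, Finset.prod_subtype (Finset.univ.filter (fun j : Fin n => j.1 < t))
      (p := p) (by intro x; simp [hp]) (fun j => w j (a j))]
  -- Left-hand side
  have hL : prb n π (fun y => (∀ j : Fin n, j.1 < t → y j = a j) ∧ P y)
      = A ar * ∑ v, (if P (e.symm (ar, v)) then B v else 0) := by
    rw [prb, hsum]
    have step : ∀ u, (∑ v, @ite ℝ ((∀ j : Fin n, j.1 < t → e.symm (u, v) j = a j) ∧ P (e.symm (u, v)))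
          (Classical.propDecidable _) (wgt n π (e.symm (u, v))) 0)
        = if u = ar then A ar * ∑ v, (if P (e.symm (ar, v)) then B v else 0) else 0 := by
      intro u
      by_cases h : u = ar
      · rw [h, if_pos rfl, Finset.mul_sum]
        apply Finset.sum_congr rfl
        intro v _
        by_cases hp' : P (e.symm (ar, v))
        · rw [if_pos ⟨(hcond ar v).mpr rfl, hp'⟩, if_pos hp', hwgt]
        · rw [if_neg (fun hh => hp' hh.2), if_neg hp', mul_zero]
      · rw [if_neg h]
        apply Finset.sum_eq_zero
        intro v _
        rw [if_neg]
        rintro ⟨h1, -⟩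
        exact h ((hcond u v).mp h1)
    simp only [step]
    rw [Finset.sum_ite_eq' Finset.univ ar
      (fun _ => A ar * ∑ v, (if P (e.symm (ar, v)) then B v else 0))]
    simp
  -- Right-hand side
  have hR : prb n π P = ∑ v, (if P (e.symm (ar, v)) then B v else 0) := by
    rw [prb, hsum]
    have step : ∀ u, (∑ v, if P (e.symm (u, v)) then wgt n π (e.symm (u, v)) else 0)
        = A u * ∑ v, (if P (e.symm (ar, v)) then B v else 0) := by
      intro u
      rw [Finset.mul_sum]
      apply Finset.sum_congr rfl
      intro v _
      by_cases hp' : P (e.symm (ar, v))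
      · rw [if_pos ((hPiff u ar v).mpr hp'), if_pos hp', hwgt]
      · rw [if_neg (fun hh => hp' ((hPiff u ar v).mp hh)), if_neg hp', mul_zero]
    simp only [step]
    rw [← Finset.sum_mul, hAone, one_mul]
  rw [hL, hR, hhead]

lemma zsum_update (n i : ℕ) (hi1 : 0 < i) (hi2 : i ≤ n) (a : Fin n → Bool) :
    zsum n (Function.update a ⟨i - 1, by omega⟩ true) i = zsum n a (i - 1) + 1 := by
  unfold zsum
  set k : Fin n := ⟨i - 1, by omega⟩ with hk
  have hset : Finset.univ.filter (fun j : Fin n => j.1 < i ∧ Function.update a k true j)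
      = insert k (Finset.univ.filter (fun j : Fin n => j.1 < i - 1 ∧ a j)) := by
    ext j
    simp only [Finset.mem_filter, Finset.mem_insert, Finset.mem_univ, true_and]
    by_cases hje : j = k
    · subst hje
      simp only [Function.update_self, and_true, true_or, iff_true, hk]
      omega
    · rw [Function.update_of_ne hje]
      have hne : j.1 ≠ i - 1 := by
        intro hh
        exact hje (Fin.ext (by rw [hh, hk]))
      constructor
      · rintro ⟨hj, hja⟩
        exact Or.inr ⟨by omega, hja⟩
      · rintro (h | ⟨hj, hja⟩)
        · exact absurd h hje
        · exact ⟨by omega, hja⟩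
  rw [hset, Finset.card_insert_of_notMem (by
    simp only [Finset.mem_filter, Finset.mem_univ, true_and, hk]
    rintro ⟨h, -⟩
    simp at h)]
  push_cast
  ring

/-- Markov property of backward sampling: the conditional law of `Y_i` given the
whole history `Y_1,...,Y_{i-1}` and the constraint depends only on `Z_{i-1}` and
equals `π_i·B_i(Z_{i-1}+1)/B_{i-1}(Z_{i-1})`. -/
theorem markov_property (n : ℕ) (π : ℕ → ℝ) (n1 : ℤ)
    (hπ : ∀ k, 1 ≤ k → k ≤ n → 0 < π k ∧ π k < 1)
    (i : ℕ) (hi1 : 1 ≤ i) (hi2 : i ≤ n)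
    (a : Fin n → Bool)
    (hpos : 0 < prb n π (fun y => (∀ j : Fin n, j.1 < i - 1 → y j = a j) ∧ zsum n y n = n1)) :
    prb n π (fun y => y ⟨i - 1, by omega⟩ = true ∧
          (∀ j : Fin n, j.1 < i - 1 → y j = a j) ∧ zsum n y n = n1) /
        prb n π (fun y => (∀ j : Fin n, j.1 < i - 1 → y j = a j) ∧ zsum n y n = n1)
      = π i * bwd n π n1 i (zsum n a (i - 1) + 1) / bwd n π n1 (i - 1) (zsum n a (i - 1)) := by
  classical
  set k : Fin n := ⟨i - 1, by omega⟩ with hk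
  set m : ℤ := zsum n a (i - 1) with hm
  set a' : Fin n → Bool := Function.update a k true with ha'
  set H : ℝ := ∏ j ∈ Finset.univ.filter (fun j : Fin n => j.1 < i - 1),
      (if a j then π (j.1 + 1) else 1 - π (j.1 + 1)) with hH
  -- denominator
  have hden : prb n π (fun y => (∀ j : Fin n, j.1 < i - 1 → y j = a j) ∧ zsum n y n = n1)
      = H * bwd n π n1 (i - 1) m := by
    have hev : ∀ y : Fin n → Bool,
        ((∀ j : Fin n, j.1 < i - 1 → y j = a j) ∧ zsum n y n = n1)
          ↔ ((∀ j : Fin n, j.1 < i - 1 → y j = a j) ∧ tcnt n y (i - 1) = n1 - m) := by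
      intro y
      have h1 := zsum_split n (i - 1) y
      constructor
      · rintro ⟨hh, h2⟩
        have h3 := zsum_head_congr n (i - 1) y a hh
        exact ⟨hh, by omega⟩
      · rintro ⟨hh, h2⟩
        have h3 := zsum_head_congr n (i - 1) y a hh
        exact ⟨hh, by omega⟩
    rw [prb_congr n π _ _ hev,
      factor n (i - 1) π a _ (fun y y' h hy => by rw [← tcnt_tail_congr n (i - 1) y y' h]; exact hy)]
    rfl
  -- zsum of updated head
  have hz' : zsum n a' i = m + 1 := by
    rw [hm, ha', hk]
    exact zsum_update n i hi1 hi2 a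
  -- numerator
  have hnum : prb n π (fun y => y ⟨i - 1, by omega⟩ = true ∧
        (∀ j : Fin n, j.1 < i - 1 → y j = a j) ∧ zsum n y n = n1)
      = H * (π i * bwd n π n1 i (m + 1)) := by
    have hev : ∀ y : Fin n → Bool,
        (y ⟨i - 1, by omega⟩ = true ∧ (∀ j : Fin n, j.1 < i - 1 → y j = a j) ∧ zsum n y n = n1)
          ↔ ((∀ j : Fin n, j.1 < i → y j = a' j) ∧ tcnt n y i = n1 - (m + 1)) := by
      intro y
      have hsplit := zsum_split n i y
      constructor
      · rintro ⟨h0, h1, h2⟩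
        have hhead : ∀ j : Fin n, j.1 < i → y j = a' j := by
          intro j hj
          by_cases hje : j = k
          · subst hje
            rw [show y k = true from h0, ha', Function.update_self]
          · have hne : j.1 ≠ i - 1 := by
              intro hh
              exact hje (Fin.ext (by rw [hh, hk]))
            rw [h1 j (by omega), ha', Function.update_of_ne hje]
        have hz := zsum_head_congr n i y a' hhead
        exact ⟨hhead, by omega⟩
      · rintro ⟨h1, h2⟩
        have h0 : y k = true := by
          rw [h1 k (by rw [hk]; simp; omega), ha', Function.update_self]
        have hh : ∀ j : Fin n, j.1 < i - 1 → y j = a j := by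
          intro j hj
          have hne : j ≠ k := by
            intro hje
            rw [hje, hk] at hj
            simp at hj
          rw [h1 j (by omega), ha', Function.update_of_ne hne]
        have hz := zsum_head_congr n i y a' h1
        exact ⟨h0, hh, by omega⟩
    rw [prb_congr n π _ _ hev,
      factor n i π a' _ (fun y y' h hy => by rw [← tcnt_tail_congr n i y y' h]; exact hy)]
    have hHi : (∏ j ∈ Finset.univ.filter (fun j : Fin n => j.1 < i),
        (if a' j then π (j.1 + 1) else 1 - π (j.1 + 1))) = H * π i := by
      have hset : Finset.univ.filter (fun j : Fin n => j.1 < i)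
          = insert k (Finset.univ.filter (fun j : Fin n => j.1 < i - 1)) := by
        ext j
        simp only [Finset.mem_filter, Finset.mem_insert, Finset.mem_univ, true_and]
        constructor
        · intro hj
          by_cases hje : j = k
          · exact Or.inl hje
          · refine Or.inr ?_
            have hne : j.1 ≠ i - 1 := by
              intro hh
              exact hje (Fin.ext (by rw [hh, hk]))
            omega
        · rintro (h | h)
          · rw [h, hk]; simp; omega
          · omega
      rw [hset, Finset.prod_insert (by
        simp only [Finset.mem_filter, Finset.mem_univ, true_and, hk]
        simp)]
      have hfac : (if a' k then π (k.1 + 1) else 1 - π (k.1 + 1)) = π i := by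
        rw [ha', Function.update_self, if_pos rfl]
        congr 1
        rw [hk]
        simp
        omega
      rw [hfac]
      have hrest : (∏ j ∈ Finset.univ.filter (fun j : Fin n => j.1 < i - 1),
          (if a' j then π (j.1 + 1) else 1 - π (j.1 + 1))) = H := by
        rw [hH]
        apply Finset.prod_congr rfl
        intro j hj
        simp only [Finset.mem_filter, Finset.mem_univ, true_and] at hj
        have hne : j ≠ k := by
          intro hje
          rw [hje, hk] at hj
          simp at hj
        rw [ha', Function.update_of_ne hne]
      rw [hrest, mul_comm]
    rw [hHi]
    rw [show prb n π (fun y => tcnt n y i = n1 - (m + 1)) = bwd n π n1 i (m + 1) from rfl]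
    ring
  -- positivity of head weight
  have hHpos : 0 < H := by
    rw [hH]
    apply Finset.prod_pos
    intro j hj
    have h1 := hπ (j.1 + 1) (by omega) (by have := j.isLt; omega)
    by_cases hb : a j = true
    · rw [if_pos hb]; exact h1.1
    · rw [if_neg hb]; linarith [h1.2]
  rw [hnum, hden, mul_div_mul_left _ _ (ne_of_gt hHpos)]
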